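/- arXiv:2204.04434 — 4 statements merged into one kernel-verified Lean document; each statement's English description precedes it below -/
import Mathlib

section
/- Let s₀ > 0, σ ∈ ℝ with s₀ + σ < 0, and d₂ > 0, and let i, j ∈ ℕ be distinct. Then the discriminant (i²+j²)²(s₀+σ)² − 4i²j²(s₀+σ)s₀ is positive, d*_{i,j} > 0, s*_{i,j} > 0, and with d₁ = d*_{i,j} and s = s*_{i,j} one has Δ(i) = 0 and Δ(j) = 0; in particular, λ = 0 is a root of the characteristic polynomial P_k(λ) = λ² − Θ(k)λ + Δ(k) for both k = i and k = j. -/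
set_option maxHeartbeats 1000000


theorem stmt_4 (s₀ σ d₂ : ℝ) (hs₀ : 0 < s₀) (hσ : s₀ + σ < 0) (hd₂ : 0 < d₂)
    (i j : ℕ) (hi : 0 < i) (hj : 0 < j) (hij : i ≠ j)
    (disc dstar sstar : ℝ)
    (hdisc : disc = ((i : ℝ) ^ 2 + (j : ℝ) ^ 2) ^ 2 * (s₀ + σ) ^ 2
      - 4 * (i : ℝ) ^ 2 * (j : ℝ) ^ 2 * (s₀ + σ) * s₀)
    (hdstar : dstar = (((i : ℝ) ^ 2 + (j : ℝ) ^ 2) * (s₀ + σ) + Real.sqrt disc)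
      / (2 * (i : ℝ) ^ 2 * (j : ℝ) ^ 2))
    (hsstar : sstar = (s₀ * d₂ * (i : ℝ) ^ 2 - dstar * d₂ * (i : ℝ) ^ 4)
      / (dstar * (i : ℝ) ^ 2 - (s₀ + σ))) :
    0 < disc ∧ 0 < dstar ∧ 0 < sstar ∧
    -- with d₁ = d*_{i,j} and s = s*_{i,j}, Δ(i) = 0 and Δ(j) = 0
    (∀ k : ℕ, k = i ∨ k = j →
      dstar * d₂ * (k : ℝ) ^ 4 + (sstar * dstar - s₀ * d₂) * (k : ℝ) ^ 2
        - sstar * (s₀ + σ) = 0) ∧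
    -- in particular λ = 0 is a root of P_k(λ) = λ² − Θ(k)λ + Δ(k) for k = i and k = j
    (∀ k : ℕ, k = i ∨ k = j →
      (0 : ℝ) ^ 2 - (s₀ - sstar - (dstar + d₂) * (k : ℝ) ^ 2) * 0
        + (dstar * d₂ * (k : ℝ) ^ 4 + (sstar * dstar - s₀ * d₂) * (k : ℝ) ^ 2
          - sstar * (s₀ + σ)) = 0) := by
  have hi1 : (1:ℝ) ≤ (i:ℝ) := by exact_mod_cast hi
  have hj1 : (1:ℝ) ≤ (j:ℝ) := by exact_mod_cast hj
  have hi2 : (1:ℝ) ≤ (i:ℝ)^2 := by nlinarith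
  have hj2 : (1:ℝ) ≤ (j:ℝ)^2 := by nlinarith
  have hna : 0 < -(s₀ + σ) := by linarith
  have hdisc_pos : 0 < disc := by
    rw [hdisc]
    nlinarith [sq_nonneg (((i:ℝ)^2+(j:ℝ)^2)*(s₀+σ)), mul_pos hna hs₀,
      mul_le_mul hi2 hj2 (by norm_num) (by nlinarith)]
  have hsq : Real.sqrt disc ^ 2 = disc := Real.sq_sqrt hdisc_pos.le
  have hsqnn := Real.sqrt_nonneg disc
  have hgt : -(((i:ℝ)^2+(j:ℝ)^2)*(s₀+σ)) < Real.sqrt disc := by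
    have h0 : (0:ℝ) ≤ -(((i:ℝ)^2+(j:ℝ)^2)*(s₀+σ)) := by nlinarith
    have h1 : (-(((i:ℝ)^2+(j:ℝ)^2)*(s₀+σ)))^2 < disc := by
      rw [hdisc]
      nlinarith [mul_pos (mul_pos (mul_pos hna hs₀) (by nlinarith : (0:ℝ) < (i:ℝ)^2)) (by nlinarith : (0:ℝ) < (j:ℝ)^2)]
    exact (Real.lt_sqrt h0).mpr h1
  have hdij : (0:ℝ) < 2 * (i:ℝ)^2 * (j:ℝ)^2 := by nlinarith
  have hdstar_pos : 0 < dstar := by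
    rw [hdstar]
    apply div_pos _ hdij
    linarith
  -- quadratic relation for dstar
  have hsqrt_eq : Real.sqrt disc = 2 * (i:ℝ)^2 * (j:ℝ)^2 * dstar - ((i:ℝ)^2+(j:ℝ)^2)*(s₀+σ) := by
    rw [hdstar]
    field_simp
    ring
  have hstar : (i:ℝ)^2*(j:ℝ)^2*dstar^2 - ((i:ℝ)^2+(j:ℝ)^2)*(s₀+σ)*dstar + (s₀+σ)*s₀ = 0 := by
    have h2 := hsq
    rw [hsqrt_eq, hdisc] at h2
    have h4 : 4*(i:ℝ)^2*(j:ℝ)^2 * ((i:ℝ)^2*(j:ℝ)^2*dstar^2 - ((i:ℝ)^2+(j:ℝ)^2)*(s₀+σ)*dstar + (s₀+σ)*s₀) = 0 := by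
      linear_combination h2
    have hne : (4*(i:ℝ)^2*(j:ℝ)^2) ≠ 0 := by positivity
    rcases mul_eq_zero.mp h4 with h | h
    · exact absurd h hne
    · exact h
  have hden : 0 < dstar * (i:ℝ)^2 - (s₀+σ) := by nlinarith
  have hdenne : dstar * (i:ℝ)^2 - (s₀+σ) ≠ 0 := ne_of_gt hden
  have hnum : 0 < s₀ - dstar * (i:ℝ)^2 := by
    have h1 : (s₀+σ) * (s₀ - dstar*(i:ℝ)^2) = dstar*(j:ℝ)^2*((s₀+σ) - dstar*(i:ℝ)^2) := by
      linear_combination hstar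
    nlinarith [mul_pos (mul_pos hdstar_pos (by nlinarith : (0:ℝ) < (j:ℝ)^2)) hden]
  have hE : sstar * (dstar*(i:ℝ)^2 - (s₀+σ)) = d₂*(i:ℝ)^2*(s₀ - dstar*(i:ℝ)^2) := by
    rw [hsstar]
    rw [div_mul_cancel₀ _ hdenne]
    ring
  have hsstar_pos : 0 < sstar := by
    rw [hsstar]
    apply div_pos _ hden
    nlinarith [mul_pos (mul_pos hd₂ (by nlinarith : (0:ℝ) < (i:ℝ)^2)) hnum]
  have hΔi : dstar * d₂ * (i:ℝ)^4 + (sstar * dstar - s₀ * d₂) * (i:ℝ)^2 - sstar * (s₀+σ) = 0 := by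
    linear_combination hE
  have hΔj : dstar * d₂ * (j:ℝ)^4 + (sstar * dstar - s₀ * d₂) * (j:ℝ)^2 - sstar * (s₀+σ) = 0 := by
    have hm : (dstar * d₂ * (j:ℝ)^4 + (sstar * dstar - s₀ * d₂) * (j:ℝ)^2 - sstar * (s₀+σ))
        * (dstar*(i:ℝ)^2 - (s₀+σ)) = 0 := by
      linear_combination (dstar*(j:ℝ)^2 - (s₀+σ)) * hE + d₂*((j:ℝ)^2 - (i:ℝ)^2) * hstar
    rcases mul_eq_zero.mp hm with h | h
    · exact h
    · exact absurd h hdenne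
  have hΔ : ∀ k : ℕ, k = i ∨ k = j →
      dstar * d₂ * (k : ℝ) ^ 4 + (sstar * dstar - s₀ * d₂) * (k : ℝ) ^ 2
        - sstar * (s₀ + σ) = 0 := by
    rintro k (rfl | rfl)
    · exact hΔi
    · exact hΔj
  refine ⟨hdisc_pos, hdstar_pos, hsstar_pos, hΔ, ?_⟩
  intro k hk
  have := hΔ k hk
  linarith [this]
end

section
/- Let s₀ > 0, σ ∈ ℝ with s₀ + σ < 0, d₂ > 0, and let i, j ∈ ℕ be distinct with d*_{i,j} i² − (s₀+σ) ≠ 0 and d*_{i,j} j² − (s₀+σ) ≠ 0 (which holds automatically since d*_{i,j} > 0 and s₀ + σ < 0). Define the Turing curves s_k(d₁) = (s₀d₂k² − d₁d₂k⁴)/(d₁k² − (s₀+σ)) for k ∈ ℕ. Then the curves for modes i and j intersect at (d*_{i,j}, s*_{i,j}): s_i(d*_{i,j}) = s*_{i,j} and s_j(d*_{i,j}) = s*_{i,j}. -/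
theorem stmt_6 (s₀ σ d₂ : ℝ) (hs₀ : 0 < s₀) (hσ : s₀ + σ < 0) (hd₂ : 0 < d₂)
    (i j : ℕ) (hi : 0 < i) (hj : 0 < j) (hij : i ≠ j)
    (dstar sstar : ℝ)
    (hdstar : dstar = (((i : ℝ) ^ 2 + (j : ℝ) ^ 2) * (s₀ + σ)
      + Real.sqrt (((i : ℝ) ^ 2 + (j : ℝ) ^ 2) ^ 2 * (s₀ + σ) ^ 2
          - 4 * (i : ℝ) ^ 2 * (j : ℝ) ^ 2 * (s₀ + σ) * s₀))
      / (2 * (i : ℝ) ^ 2 * (j : ℝ) ^ 2))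
    (hsstar : sstar = (s₀ * d₂ * (i : ℝ) ^ 2 - dstar * d₂ * (i : ℝ) ^ 4)
      / (dstar * (i : ℝ) ^ 2 - (s₀ + σ)))
    (hdeni : dstar * (i : ℝ) ^ 2 - (s₀ + σ) ≠ 0)
    (hdenj : dstar * (j : ℝ) ^ 2 - (s₀ + σ) ≠ 0)
    -- the Turing curves s_k(d₁) = (s₀d₂k² − d₁d₂k⁴)/(d₁k² − (s₀+σ))
    (scurve : ℕ → ℝ → ℝ)
    (hscurve : ∀ k : ℕ, ∀ d₁ : ℝ,
      scurve k d₁ = (s₀ * d₂ * (k : ℝ) ^ 2 - d₁ * d₂ * (k : ℝ) ^ 4)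
        / (d₁ * (k : ℝ) ^ 2 - (s₀ + σ))) :
    scurve i dstar = sstar ∧ scurve j dstar = sstar := by
  have hi' : (i : ℝ) ≠ 0 := Nat.cast_ne_zero.mpr hi.ne'
  have hj' : (j : ℝ) ≠ 0 := Nat.cast_ne_zero.mpr hj.ne'
  have hi2 : (0:ℝ) < (i:ℝ)^2 := by positivity
  have hj2 : (0:ℝ) < (j:ℝ)^2 := by positivity
  have hdisc : 0 ≤ ((i : ℝ) ^ 2 + (j : ℝ) ^ 2) ^ 2 * (s₀ + σ) ^ 2
      - 4 * (i : ℝ) ^ 2 * (j : ℝ) ^ 2 * (s₀ + σ) * s₀ := by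
    have h1 : 0 < -(s₀ + σ) := by linarith
    nlinarith [mul_pos hi2 hj2, mul_pos (mul_pos hi2 hj2) (mul_pos h1 hs₀),
      sq_nonneg (((i : ℝ) ^ 2 + (j : ℝ) ^ 2) * (s₀ + σ))]
  have hr2 := Real.sq_sqrt hdisc
  set r := Real.sqrt (((i : ℝ) ^ 2 + (j : ℝ) ^ 2) ^ 2 * (s₀ + σ) ^ 2
      - 4 * (i : ℝ) ^ 2 * (j : ℝ) ^ 2 * (s₀ + σ) * s₀) with hr
  have heq : 2 * (i:ℝ)^2 * (j:ℝ)^2 * dstar = ((i:ℝ)^2 + (j:ℝ)^2) * (s₀ + σ) + r := by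
    rw [hdstar]; field_simp
  have key4 : (4 * ((i:ℝ)^2 * (j:ℝ)^2)) * ((i:ℝ)^2 * (j:ℝ)^2 * dstar^2
      - ((i:ℝ)^2 + (j:ℝ)^2) * (s₀ + σ) * dstar + (s₀ + σ) * s₀) = 0 := by
    linear_combination (2 * (i:ℝ)^2 * (j:ℝ)^2 * dstar - ((i:ℝ)^2 + (j:ℝ)^2) * (s₀ + σ) + r)
      * heq + hr2
  have key : (i:ℝ)^2 * (j:ℝ)^2 * dstar^2 - ((i:ℝ)^2 + (j:ℝ)^2) * (s₀ + σ) * dstar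
      + (s₀ + σ) * s₀ = 0 := by
    rcases mul_eq_zero.mp key4 with h | h
    · exact absurd h (by positivity)
    · exact h
  constructor
  · rw [hscurve, hsstar]
  · rw [hscurve, hsstar, div_eq_div_iff hdenj hdeni]
    linear_combination (d₂ * ((i:ℝ)^2 - (j:ℝ)^2)) * key
end

section
/- Let s₀ > 0, σ < 0 with s₀ + σ < 0, and d₂ > 0. For k ∈ ℕ define d_k* = (s₀/k²)(1 + σ/(d₂k² + s₀)) and let k₀* = max{ξ ∈ ℕ : d_ξ* = max_{k∈ℕ} d_k*}. Let k₀ ∈ ℕ with k₀ > k₀* (so k₀ ≥ 2), and set d₁ = d*_{k₀−1,k₀}, s = s*_{k₀−1,k₀}. Then: Δ(k₀−1) = 0 and Δ(k₀) = 0; Θ(k) < 0 for every k ∈ ℕ₀; and Δ(k) > 0 for every k ∈ ℕ₀ with k ∉ {k₀−1, k₀}. Consequently, for every k ∈ ℕ₀, every complex root λ of P_k(λ) = λ² − Θ(k)λ + Δ(k) satisfies: either λ = 0, which happens exactly when k ∈ {k₀−1, k₀} and is then a simple root, or Re λ < 0. -/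
private lemma dF_le (s₀ σ d₂ y z : ℝ) (hs₀ : 0 < s₀) (hd₂ : 0 < d₂) (hz : 0 < z)
    (hzy : z ≤ y)
    (hh : d₂^2*y*z + (s₀+σ)*d₂*(y+z) + (s₀+σ)*s₀ ≤ 0) :
    s₀ / z * (1 + σ / (d₂ * z + s₀)) ≤ s₀ / y * (1 + σ / (d₂ * y + s₀)) := by
  have hy : 0 < y := lt_of_lt_of_le hz hzy
  have h1 : 0 < d₂ * z + s₀ := by nlinarith
  have h2 : 0 < d₂ * y + s₀ := by nlinarith
  rw [← sub_nonneg]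
  have key : s₀ / y * (1 + σ / (d₂ * y + s₀)) - s₀ / z * (1 + σ / (d₂ * z + s₀))
      = (s₀ * (y - z) * (-(d₂^2*y*z + (s₀+σ)*d₂*(y+z) + (s₀+σ)*s₀)))
        / (y * z * ((d₂ * y + s₀) * (d₂ * z + s₀))) := by
    field_simp
    ring
  rw [key]
  apply div_nonneg
  · exact mul_nonneg (mul_nonneg hs₀.le (by linarith)) (by linarith)
  · positivity

private lemma dF_lt (s₀ σ d₂ y z : ℝ) (hs₀ : 0 < s₀) (hd₂ : 0 < d₂) (hz : 0 < z)
    (hzy : z < y)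
    (hh : 0 < d₂^2*y*z + (s₀+σ)*d₂*(y+z) + (s₀+σ)*s₀) :
    s₀ / y * (1 + σ / (d₂ * y + s₀)) < s₀ / z * (1 + σ / (d₂ * z + s₀)) := by
  have hy : 0 < y := lt_trans hz hzy
  have h1 : 0 < d₂ * z + s₀ := by nlinarith
  have h2 : 0 < d₂ * y + s₀ := by nlinarith
  rw [← sub_pos]
  have key : s₀ / z * (1 + σ / (d₂ * z + s₀)) - s₀ / y * (1 + σ / (d₂ * y + s₀))
      = (s₀ * (y - z) * (d₂^2*y*z + (s₀+σ)*d₂*(y+z) + (s₀+σ)*s₀))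
        / (y * z * ((d₂ * y + s₀) * (d₂ * z + s₀))) := by
    field_simp
    ring
  rw [key]
  apply div_pos
  · exact mul_pos (mul_pos hs₀ (by linarith)) hh
  · positivity

private lemma h_step (c d₂ s₀ x y z : ℝ) (hc : c < 0) (hs₀ : 0 < s₀) (hd₂ : 0 < d₂)
    (hz : 0 < z) (hzy : z ≤ y) (hyx : y ≤ x)
    (hh : d₂^2*x*y + c*d₂*(x+y) + c*s₀ ≤ 0) :
    d₂^2*y*z + c*d₂*(y+z) + c*s₀ ≤ 0 := by
  rcases le_or_gt 0 (d₂*y + c) with h | h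
  · nlinarith [mul_nonneg (mul_nonneg hd₂.le (sub_nonneg.2 (hzy.trans hyx))) h]
  · nlinarith [mul_neg_of_pos_of_neg (mul_pos hd₂ hz) h,
      mul_neg_of_neg_of_pos hc (by nlinarith : (0:ℝ) < d₂*y + s₀)]

private lemma quad_root_neg (θ δ : ℝ) (hθ : θ < 0) (hδ : 0 < δ) (lam : ℂ)
    (h : lam ^ 2 - (θ : ℂ) * lam + (δ : ℂ) = 0) : lam.re < 0 := by
  have hre := congrArg Complex.re h
  have him := congrArg Complex.im h
  simp [pow_two, Complex.mul_re, Complex.mul_im, Complex.ofReal_re, Complex.ofReal_im,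
    Complex.add_re, Complex.sub_re, Complex.add_im, Complex.sub_im] at hre him
  rcases eq_or_ne lam.im 0 with hb | hb
  · rw [hb] at hre
    by_contra hge
    push_neg at hge
    nlinarith
  · have h2 : lam.im * (2 * lam.re - θ) = 0 := by linear_combination him
    rcases mul_eq_zero.mp h2 with h3 | h3
    · exact absurd h3 hb
    · linarith

set_option maxHeartbeats 1000000 in
theorem stmt_8 (s₀ σ d₂ : ℝ) (hs₀ : 0 < s₀) (hσ : σ < 0) (hsσ : s₀ + σ < 0) (hd₂ : 0 < d₂)
    -- d_k* = (s₀/k²)(1 + σ/(d₂k² + s₀))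
    (d : ℕ → ℝ)
    (hd : ∀ k : ℕ, d k = (s₀ / (k : ℝ) ^ 2) * (1 + σ / (d₂ * (k : ℝ) ^ 2 + s₀)))
    -- k₀* is the largest maximizer of k ↦ d_k* over ℕ = {1, 2, …}
    (k₀star : ℕ) (hk₀star_pos : 0 < k₀star)
    (hk₀star_max : ∀ k : ℕ, 0 < k → d k ≤ d k₀star)
    (hk₀star_largest : ∀ ξ : ℕ, 0 < ξ → (∀ k : ℕ, 0 < k → d k ≤ d ξ) → ξ ≤ k₀star)
    (k₀ : ℕ) (hk₀ : k₀star < k₀)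
    -- d₁ = d*_{k₀−1,k₀} and s = s*_{k₀−1,k₀}
    (d₁ s : ℝ)
    (hd₁ : d₁ = ((((k₀ : ℝ) - 1) ^ 2 + (k₀ : ℝ) ^ 2) * (s₀ + σ)
      + Real.sqrt (((((k₀ : ℝ) - 1) ^ 2 + (k₀ : ℝ) ^ 2) ^ 2 * (s₀ + σ) ^ 2
          - 4 * ((k₀ : ℝ) - 1) ^ 2 * (k₀ : ℝ) ^ 2 * (s₀ + σ) * s₀)))
      / (2 * ((k₀ : ℝ) - 1) ^ 2 * (k₀ : ℝ) ^ 2))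
    (hs : s = (s₀ * d₂ * ((k₀ : ℝ) - 1) ^ 2 - d₁ * d₂ * ((k₀ : ℝ) - 1) ^ 4)
      / (d₁ * ((k₀ : ℝ) - 1) ^ 2 - (s₀ + σ)))
    -- Δ(k) and Θ(k)
    (Δ Θ : ℕ → ℝ)
    (hΔ : ∀ k : ℕ, Δ k = d₁ * d₂ * (k : ℝ) ^ 4 + (s * d₁ - s₀ * d₂) * (k : ℝ) ^ 2
      - s * (s₀ + σ))
    (hΘ : ∀ k : ℕ, Θ k = s₀ - s - (d₁ + d₂) * (k : ℝ) ^ 2) :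
    2 ≤ k₀ ∧
    Δ (k₀ - 1) = 0 ∧ Δ k₀ = 0 ∧
    (∀ k : ℕ, Θ k < 0) ∧
    (∀ k : ℕ, k ≠ k₀ - 1 → k ≠ k₀ → 0 < Δ k) ∧
    -- every complex root λ of P_k(λ) = λ² − Θ(k)λ + Δ(k) is either a simple zero root
    -- (happening exactly when k ∈ {k₀−1, k₀}) or has negative real part
    (∀ k : ℕ, ∀ lam : ℂ,
      lam ^ 2 - (Θ k : ℂ) * lam + (Δ k : ℂ) = 0 →
        (lam = 0 ∧ (k = k₀ - 1 ∨ k = k₀) ∧ Θ k ≠ 0) ∨ lam.re < 0) ∧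
    (∀ k : ℕ,
      ((0 : ℂ) ^ 2 - (Θ k : ℂ) * 0 + (Δ k : ℂ) = 0 ↔ (k = k₀ - 1 ∨ k = k₀))) := by
  have hk2 : 2 ≤ k₀ := by omega
  have hk₀R : (2 : ℝ) ≤ (k₀ : ℝ) := by exact_mod_cast hk2
  have hcast : ((k₀ - 1 : ℕ) : ℝ) = (k₀ : ℝ) - 1 := by
    rw [Nat.cast_sub (by omega : 1 ≤ k₀)]; simp
  rw [show ((k₀ : ℝ) - 1) ^ 4 = (((k₀ : ℝ) - 1) ^ 2) ^ 2 from by ring] at hs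
  obtain ⟨I, hI⟩ : ∃ x : ℝ, x = ((k₀ : ℝ) - 1) ^ 2 := ⟨_, rfl⟩
  obtain ⟨J, hJ⟩ : ∃ x : ℝ, x = (k₀ : ℝ) ^ 2 := ⟨_, rfl⟩
  rw [← hI] at hd₁ hs
  rw [← hJ] at hd₁
  obtain ⟨A, hA⟩ : ∃ x : ℝ, x = (I + J) ^ 2 * (s₀ + σ) ^ 2 - 4 * I * J * (s₀ + σ) * s₀ := ⟨_, rfl⟩
  rw [← hA] at hd₁
  have hI_pos : 0 < I := by rw [hI]; nlinarith
  have hJ_pos : 0 < J := by rw [hJ]; nlinarith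
  have hIJ : I < J := by rw [hI, hJ]; nlinarith
  have hIJle : I ≤ J := hIJ.le
  -- basic facts about A and d₁
  have hB_neg : (I + J) * (s₀ + σ) < 0 := mul_neg_of_pos_of_neg (by linarith) hsσ
  have hA_gt : ((I + J) * (s₀ + σ)) ^ 2 < A := by
    rw [hA]
    nlinarith [mul_pos hI_pos hJ_pos, mul_neg_of_neg_of_pos hsσ hs₀]
  have hA_nonneg : 0 ≤ A := by nlinarith [sq_nonneg ((I + J) * (s₀ + σ))]
  have hsq : Real.sqrt A ^ 2 = A := Real.sq_sqrt hA_nonneg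
  have hsqrt_nonneg : 0 ≤ Real.sqrt A := Real.sqrt_nonneg A
  have h2 : 2 * I * J * d₁ = (I + J) * (s₀ + σ) + Real.sqrt A := by
    rw [hd₁]; field_simp
  have hsqrtB : -((I + J) * (s₀ + σ)) < Real.sqrt A := by
    by_contra hcon
    push_neg at hcon
    have h5 : Real.sqrt A ^ 2 ≤ (-((I + J) * (s₀ + σ))) ^ 2 :=
      pow_le_pow_left₀ hsqrt_nonneg hcon 2
    rw [neg_sq] at h5
    linarith [hsq, hA_gt, h5]
  have hd₁_pos : 0 < d₁ := by
    have h0 : 0 < 2 * I * J * d₁ := by rw [h2]; linarith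
    nlinarith [mul_pos hI_pos hJ_pos]
  -- quadratic relation for d₁
  have hQ : I * J * d₁ ^ 2 - (I + J) * (s₀ + σ) * d₁ + (s₀ + σ) * s₀ = 0 := by
    have h3 : 2 * I * J * d₁ - (I + J) * (s₀ + σ) = Real.sqrt A := by linarith
    have h4 : (2 * I * J * d₁ - (I + J) * (s₀ + σ)) ^ 2 = A := by rw [h3]; exact hsq
    have h5 : 4 * I * J * (I * J * d₁ ^ 2 - (I + J) * (s₀ + σ) * d₁ + (s₀ + σ) * s₀) = 0 := by
      rw [hA] at h4; linear_combination h4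
    have h6 : (4 : ℝ) * I * J ≠ 0 := by positivity
    exact (mul_eq_zero.mp (by linear_combination h5 : (4 * I * J) * (I * J * d₁ ^ 2 - (I + J) * (s₀ + σ) * d₁ + (s₀ + σ) * s₀) = 0)).resolve_left h6
  -- relation for s
  have hD_pos : 0 < d₁ * I - (s₀ + σ) := by nlinarith [mul_pos hd₁_pos hI_pos]
  have h4s : s * (d₁ * I - (s₀ + σ)) = s₀ * d₂ * I - d₁ * d₂ * I ^ 2 := by
    rw [hs]; exact div_mul_cancel₀ _ hD_pos.ne'
  have hsc : s * (s₀ + σ) + I * J * d₁ * d₂ = 0 := by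
    have h5 : (s * (s₀ + σ) + I * J * d₁ * d₂) * (d₁ * I - (s₀ + σ)) = 0 := by
      linear_combination (s₀ + σ) * h4s + d₂ * I * hQ
    exact (mul_eq_zero.mp h5).resolve_right hD_pos.ne'
  have hsum : s * d₁ - s₀ * d₂ + (I + J) * d₁ * d₂ = 0 := by
    have h5 : (s * d₁ - s₀ * d₂ + (I + J) * d₁ * d₂) * (s₀ + σ) = 0 := by
      linear_combination d₁ * hsc - d₂ * hQ
    exact (mul_eq_zero.mp h5).resolve_right hsσ.ne
  -- factorization of Δ
  have hfact : ∀ k : ℕ, Δ k = d₁ * d₂ * ((k : ℝ) ^ 2 - I) * ((k : ℝ) ^ 2 - J) := by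
    intro k
    rw [hΔ]
    linear_combination ((k : ℝ) ^ 2) * hsum - hsc
  have hΔI : Δ (k₀ - 1) = 0 := by
    rw [hfact, hcast, hI]; ring
  have hΔJ : Δ k₀ = 0 := by
    rw [hfact, hJ]; ring
  -- d-values at k₀-1 and k₀
  have hdI : d (k₀ - 1) = s₀ / I * (1 + σ / (d₂ * I + s₀)) := by
    rw [hd, hcast, hI]
  have hdJ : d k₀ = s₀ / J * (1 + σ / (d₂ * J + s₀)) := by
    rw [hd, hJ]
  -- the key inequality E > 0 coming from the maximizer hypotheses
  have hEpos : 0 < d₂ ^ 2 * J * I + (s₀ + σ) * d₂ * (J + I) + (s₀ + σ) * s₀ := by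
    by_contra hE
    push_neg at hE
    have hJI : d (k₀ - 1) ≤ d k₀ := by
      rw [hdI, hdJ]
      exact dF_le s₀ σ d₂ J I hs₀ hd₂ hI_pos hIJle hE
    have key : ∀ m : ℕ, 0 < m → m ≤ k₀ - 1 → d m ≤ d (k₀ - 1) := by
      intro m hm hmle
      have hz : 0 < ((m : ℝ)) ^ 2 := by positivity
      have hmle' : (m : ℝ) ≤ (k₀ : ℝ) - 1 := by
        have : (m : ℝ) + 1 ≤ (k₀ : ℝ) := by exact_mod_cast (by omega : m + 1 ≤ k₀)
        linarith
      have hzy : ((m : ℝ)) ^ 2 ≤ I := by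
        rw [hI]; nlinarith [Nat.cast_nonneg (α := ℝ) m]
      have hh := h_step (s₀ + σ) d₂ s₀ J I ((m : ℝ) ^ 2) hsσ hs₀ hd₂ hz hzy hIJle hE
      have := dF_le s₀ σ d₂ I ((m : ℝ) ^ 2) hs₀ hd₂ hz hzy hh
      rw [← hd m, ← hdI] at this
      exact this
    have hmaxall : ∀ k : ℕ, 0 < k → d k ≤ d k₀ := by
      intro k hk
      rcases le_or_gt k (k₀ - 1) with h | h
      · exact le_trans (key k hk h) hJI
      · rcases eq_or_lt_of_le (by omega : k₀ ≤ k) with rfl | hlt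
        · exact le_refl _
        · exact le_trans (hk₀star_max k hk)
            (le_trans (key k₀star hk₀star_pos (by omega)) hJI)
    have := hk₀star_largest k₀ (by omega) hmaxall
    omega
  -- s > s₀
  have hs_gt : s₀ < s := by
    have hR' : 0 ≤ -((I + J) * (s₀ + σ)) * d₂ - 2 * s₀ * (s₀ + σ) := by
      nlinarith [mul_neg_of_neg_of_pos hB_neg hd₂]
    have h1 : (-((I + J) * (s₀ + σ)) * d₂ - 2 * s₀ * (s₀ + σ)) ^ 2 < d₂ ^ 2 * A := by
      rw [hA]
      have hhint : 0 < (-(4 * s₀ * (s₀ + σ))) *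
          (d₂ ^ 2 * J * I + (s₀ + σ) * d₂ * (J + I) + (s₀ + σ) * s₀) :=
        mul_pos (by nlinarith) hEpos
      linarith [hhint]
    have h2' : -((I + J) * (s₀ + σ)) * d₂ - 2 * s₀ * (s₀ + σ) < d₂ * Real.sqrt A := by
      by_contra hcon
      push_neg at hcon
      have hmm := mul_self_le_mul_self (by positivity : (0:ℝ) ≤ d₂ * Real.sqrt A) hcon
      have hds : d₂ ^ 2 * Real.sqrt A ^ 2 = d₂ ^ 2 * A := by rw [hsq]
      linarith [hmm, hds, h1]
    have h2d : d₂ * (2 * I * J * d₁) = d₂ * ((I + J) * (s₀ + σ)) + d₂ * Real.sqrt A := by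
      rw [h2]; ring
    have h3 : 0 < I * J * d₁ * d₂ + s₀ * (s₀ + σ) := by linarith [h2d, h2']
    have h4 : s * (s₀ + σ) < s₀ * (s₀ + σ) := by linarith
    by_contra hcon
    push_neg at hcon
    have := mul_le_mul_of_nonpos_right hcon hsσ.le
    linarith
  -- Θ < 0
  have hΘneg : ∀ k : ℕ, Θ k < 0 := by
    intro k
    rw [hΘ]
    have h0 : 0 ≤ (d₁ + d₂) * (k : ℝ) ^ 2 :=
      mul_nonneg (by positivity) (sq_nonneg (k : ℝ))
    linarith [hs_gt, h0]
  -- Δ > 0 off the two modes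
  have hΔpos : ∀ k : ℕ, k ≠ k₀ - 1 → k ≠ k₀ → 0 < Δ k := by
    intro k h1 h2'
    rw [hfact]
    rcases (by omega : k + 2 ≤ k₀ ∨ k₀ + 1 ≤ k) with hk | hk
    · have hkR : (k : ℝ) + 2 ≤ (k₀ : ℝ) := by exact_mod_cast hk
      have hknn : (0:ℝ) ≤ (k : ℝ) := Nat.cast_nonneg k
      have hk1 : (k : ℝ) ^ 2 < I := by
        rw [hI]
        have := mul_pos (show (0:ℝ) < (k₀:ℝ) - 1 - (k:ℝ) by linarith)
          (show (0:ℝ) < (k₀:ℝ) - 1 + (k:ℝ) by linarith)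
        linarith [this]
      have hk2' : (k : ℝ) ^ 2 < J := by
        rw [hJ]
        have := mul_pos (show (0:ℝ) < (k₀:ℝ) - (k:ℝ) by linarith)
          (show (0:ℝ) < (k₀:ℝ) + (k:ℝ) by linarith)
        linarith [this]
      exact mul_pos_of_neg_of_neg
        (mul_neg_of_pos_of_neg (mul_pos hd₁_pos hd₂) (by linarith)) (by linarith)
    · have hkR : (k₀ : ℝ) + 1 ≤ (k : ℝ) := by exact_mod_cast hk
      have hk1 : I < (k : ℝ) ^ 2 := by
        rw [hI]
        have := mul_pos (show (0:ℝ) < (k:ℝ) - ((k₀:ℝ) - 1) by linarith)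
          (show (0:ℝ) < (k:ℝ) + ((k₀:ℝ) - 1) by linarith)
        linarith [this]
      have hk2' : J < (k : ℝ) ^ 2 := by
        rw [hJ]
        have := mul_pos (show (0:ℝ) < (k:ℝ) - (k₀:ℝ) by linarith)
          (show (0:ℝ) < (k:ℝ) + (k₀:ℝ) by linarith)
        linarith [this]
      exact mul_pos (mul_pos (mul_pos hd₁_pos hd₂) (by linarith)) (by linarith)
  refine ⟨hk2, hΔI, hΔJ, hΘneg, hΔpos, ?_, ?_⟩
  · intro k lam hlam
    by_cases hk : k = k₀ - 1 ∨ k = k₀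
    · have hΔ0 : Δ k = 0 := by
        rcases hk with h | h
        · rw [h]; exact hΔI
        · rw [h]; exact hΔJ
      rw [hΔ0] at hlam
      push_cast at hlam
      have hfac : lam * (lam - (Θ k : ℂ)) = 0 := by linear_combination hlam
      rcases mul_eq_zero.mp hfac with h0 | h0
      · exact Or.inl ⟨h0, hk, (hΘneg k).ne⟩
      · right
        rw [sub_eq_zero] at h0
        rw [h0]
        simpa using hΘneg k
    · push_neg at hk
      exact Or.inr (quad_root_neg (Θ k) (Δ k) (hΘneg k) (hΔpos k hk.1 hk.2) lam hlam)
  · intro k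
    constructor
    · intro h0
      by_contra hk
      push_neg at hk
      have : (Δ k : ℂ) = 0 := by linear_combination h0
      have hΔ0 : Δ k = 0 := by exact_mod_cast this
      exact absurd hΔ0 (hΔpos k hk.1 hk.2).ne'
    · intro hk
      have hΔ0 : Δ k = 0 := by
        rcases hk with h | h
        · rw [h]; exact hΔI
        · rw [h]; exact hΔJ
      rw [hΔ0]
      push_cast
      ring
end

section
/- Let m, a, b > 0 with a + b ≥ ab, and let s > 0. Then there is a unique u > 0 such that (1−u)(1+au)(1+bu) = mu, and this u lies in (0,1). Consequently, the kinetic system f(u,v) = u(1−u) − muv/((1+au)(1+bv)) = 0, g(u,v) = sv(1 − v/u) = 0 has a unique solution (u*, v*) with u* > 0 and v* > 0, and it satisfies v* = u*. -/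
theorem stmt_10 (m a b s : ℝ) (hm : 0 < m) (ha : 0 < a) (hb : 0 < b)
    (hab : a * b ≤ a + b) (hs : 0 < s) :
    -- unique u > 0 with (1−u)(1+au)(1+bu) = mu, and it lies in (0,1)
    (∃! u : ℝ, 0 < u ∧ (1 - u) * (1 + a * u) * (1 + b * u) = m * u) ∧
    (∀ u : ℝ, 0 < u → (1 - u) * (1 + a * u) * (1 + b * u) = m * u → u ∈ Set.Ioo (0 : ℝ) 1) ∧
    -- unique interior equilibrium of the kinetics, and it satisfies v* = u*
    (∃! p : ℝ × ℝ, 0 < p.1 ∧ 0 < p.2 ∧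
      p.1 * (1 - p.1) - m * p.1 * p.2 / ((1 + a * p.1) * (1 + b * p.2)) = 0 ∧
      s * p.2 * (1 - p.2 / p.1) = 0) ∧
    (∀ p : ℝ × ℝ, 0 < p.1 → 0 < p.2 →
      p.1 * (1 - p.1) - m * p.1 * p.2 / ((1 + a * p.1) * (1 + b * p.2)) = 0 →
      s * p.2 * (1 - p.2 / p.1) = 0 → p.2 = p.1) := by
  -- uniqueness lemma
  have uniq : ∀ u1 u2 : ℝ, 0 < u1 → 0 < u2 →
      (1 - u1) * (1 + a * u1) * (1 + b * u1) = m * u1 →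
      (1 - u2) * (1 + a * u2) * (1 + b * u2) = m * u2 → u1 = u2 := by
    intro u1 u2 h1 h2 e1 e2
    have key : (u2 - u1) * (1 + (a + b - a * b) * (u1 * u2)
        + a * b * (u1 * u2) * (u1 + u2)) = 0 := by
      linear_combination u2 * e1 - u1 * e2
    have hpos : 0 < 1 + (a + b - a * b) * (u1 * u2) + a * b * (u1 * u2) * (u1 + u2) := by
      have h12 : 0 < u1 * u2 := mul_pos h1 h2
      nlinarith [mul_pos (mul_pos ha hb) h12, mul_pos h12 (add_pos h1 h2),
        mul_nonneg (sub_nonneg.2 hab) h12.le]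
    have : u2 - u1 = 0 := by
      rcases mul_eq_zero.1 key with h | h
      · exact h
      · exact absurd h hpos.ne'
    linarith
  -- existence of root in (0,1)
  obtain ⟨u, hu01, huroot⟩ : ∃ u ∈ Set.Ioo (0:ℝ) 1,
      (fun u => (1 - u) * (1 + a * u) * (1 + b * u) - m * u) u = 0 := by
    have hc : ContinuousOn (fun u : ℝ => (1 - u) * (1 + a * u) * (1 + b * u) - m * u)
        (Set.Icc 0 1) := by fun_prop
    have hsub := intermediate_value_Ioo' (by norm_num : (0:ℝ) ≤ 1) hc
    have h0 : (0:ℝ) ∈ Set.Ioo ((1 - (1:ℝ)) * (1 + a * 1) * (1 + b * 1) - m * 1)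
        ((1 - (0:ℝ)) * (1 + a * 0) * (1 + b * 0) - m * 0) := by
      constructor <;> simp <;> nlinarith
    obtain ⟨u, hu, hval⟩ := hsub h0
    exact ⟨u, hu, hval⟩
  simp only at huroot
  have hu0 : 0 < u := hu01.1
  have hueq : (1 - u) * (1 + a * u) * (1 + b * u) = m * u := by linarith
  have hDu : 0 < (1 + a * u) * (1 + b * u) :=
    mul_pos (by nlinarith) (by nlinarith)
  -- part 2: any positive root lies in (0,1)
  have part2 : ∀ w : ℝ, 0 < w → (1 - w) * (1 + a * w) * (1 + b * w) = m * w →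
      w ∈ Set.Ioo (0:ℝ) 1 := by
    intro w hw hweq
    refine ⟨hw, ?_⟩
    by_contra h
    push_neg at h
    have h1 : 1 - w ≤ 0 := by linarith
    nlinarith [mul_pos hm hw, mul_pos (mul_pos ha hw) (mul_pos hb hw),
      mul_pos ha hw, mul_pos hb hw]
  refine ⟨⟨u, ⟨hu0, hueq⟩, fun w ⟨hw, hweq⟩ => (uniq u w hu0 hw hueq hweq).symm⟩, part2, ?_, ?_⟩
  · -- unique equilibrium
    refine ⟨(u, u), ⟨hu0, hu0, ?_, ?_⟩, ?_⟩
    · show u * (1 - u) - m * u * u / ((1 + a * u) * (1 + b * u)) = 0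
      rw [sub_eq_zero, eq_div_iff hDu.ne']
      linear_combination u * hueq
    · show s * u * (1 - u / u) = 0
      rw [div_self hu0.ne']
      ring
    · rintro ⟨q1, q2⟩ ⟨hq1, hq2, hf, hg⟩
      simp only at hf hg hq1 hq2
      -- from g : q2 = q1
      have hv : q2 = q1 := by
        have h1 : 1 - q2 / q1 = 0 := by
          rcases mul_eq_zero.1 hg with h | h
          · rcases mul_eq_zero.1 h with h' | h'
            · exact absurd h' hs.ne'
            · exact absurd h' hq2.ne'
          · exact h
        field_simp at h1
        linarith
      subst hv
      have hD : 0 < (1 + a * q2) * (1 + b * q2) :=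
        mul_pos (by nlinarith) (by nlinarith)
      have heq : (1 - q2) * (1 + a * q2) * (1 + b * q2) = m * q2 := by
        rw [sub_eq_zero, eq_div_iff hD.ne'] at hf
        have key : q2 * ((1 - q2) * (1 + a * q2) * (1 + b * q2) - m * q2) = 0 := by
          linear_combination hf
        rcases mul_eq_zero.1 key with h | h
        · exact absurd h hq2.ne'
        · linarith
      have : u = q2 := uniq u q2 hu0 hq2 hueq heq
      simp [Prod.ext_iff, this]
  · rintro ⟨q1, q2⟩ hq1 hq2 hf hg
    simp only at hf hg hq1 hq2 ⊢
    have h1 : 1 - q2 / q1 = 0 := by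
      rcases mul_eq_zero.1 hg with h | h
      · rcases mul_eq_zero.1 h with h' | h'
        · exact absurd h' hs.ne'
        · exact absurd h' hq2.ne'
      · exact h
    field_simp at h1
    linarith
end
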